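/- If $G$ is a connected graph with connected complement $\overline{G}$ and $diam(G) = 3$, then $\overline{G}$ has a spanning subgraph which is a double star (a tree obtained from an edge by attaching leaves to its two endpoints). -/

import Mathlib

open SimpleGraph

/-- A total coloring (edge colors `cE`, vertex colors `cV`) makes `G`
total-rainbow connected if any two distinct vertices are joined by a path
whose edges and internal vertices receive pairwise distinct colors. -/
def IsTRCColoring {V : Type*} (G : SimpleGraph V) {k : ℕ}
    (cE : Sym2 V → Fin k) (cV : V → Fin k) : Prop :=
  ∀ u v : V, u ≠ v → ∃ p : G.Walk u v, p.IsPath ∧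
    (p.edges.map cE ++ p.support.tail.dropLast.map cV).Nodup

/-- The total-rainbow connection number of `G`. -/
noncomputable def trc {V : Type*} (G : SimpleGraph V) : ℕ :=
  sInf {k | ∃ (cE : Sym2 V → Fin k) (cV : V → Fin k), IsTRCColoring G cE cV}

/-- A double star: a tree obtained from an edge by attaching leaves to its
two endpoints (its only internal vertices are two adjacent vertices). -/
def IsDoubleStar {V : Type*} [Fintype V] [DecidableEq V]
    (H : SimpleGraph V) [DecidableRel H.Adj] : Prop :=
  H.IsTree ∧ ∃ u v : V, H.Adj u v ∧
    ∀ w : V, w ≠ u → w ≠ v → H.degree w = 1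


section DStar
variable {V : Type*}

/-- The double star on `u, v` with each other vertex `w` attached to `att w ∈ {u,v}`. -/
def dstar (u v : V) (att : V → V) (hne : u ≠ v)
    (hmem : ∀ w, att w = u ∨ att w = v) : SimpleGraph V where
  Adj a b := (a = u ∧ b = v) ∨ (a = v ∧ b = u) ∨
    (a ≠ u ∧ a ≠ v ∧ b = att a) ∨ (b ≠ u ∧ b ≠ v ∧ a = att b)
  symm := ⟨fun a b h => by tauto⟩
  loopless := ⟨fun a h => by
    rcases h with ⟨rfl, h⟩ | ⟨rfl, h⟩ | ⟨h1, h2, h3⟩ | ⟨h1, h2, h3⟩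
    · exact hne h
    · exact hne h.symm
    · rcases hmem a with h4 | h4 <;> [exact h1 (h3.trans h4); exact h2 (h3.trans h4)]
    · rcases hmem a with h4 | h4 <;> [exact h1 (h3.trans h4); exact h2 (h3.trans h4)]⟩

variable {u v : V} {att : V → V} {hne : u ≠ v} {hmem : ∀ w, att w = u ∨ att w = v}

lemma dstar_adj_uv : (dstar u v att hne hmem).Adj u v := Or.inl ⟨rfl, rfl⟩

lemma dstar_adj_leaf {w b : V} (hw1 : w ≠ u) (hw2 : w ≠ v) :
    (dstar u v att hne hmem).Adj w b ↔ b = att w := by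
  constructor
  · rintro (⟨rfl, h⟩ | ⟨rfl, h⟩ | ⟨h1, h2, h3⟩ | ⟨h1, h2, h3⟩)
    · exact absurd rfl hw1
    · exact absurd rfl hw2
    · exact h3
    · rcases hmem b with h4 | h4 <;> rw [h4] at h3
      · exact absurd h3 hw1
      · exact absurd h3 hw2
  · rintro rfl; exact Or.inr (Or.inr (Or.inl ⟨hw1, hw2, rfl⟩))

lemma dstar_connected : (dstar u v att hne hmem).Connected := by
  rw [connected_iff_exists_forall_reachable]
  refine ⟨u, fun a => ?_⟩
  by_cases ha : a = u
  · rw [ha]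
  by_cases ha' : a = v
  · rw [ha']; exact (dstar_adj_uv (hne := hne) (hmem := hmem)).reachable
  · have h1 : (dstar u v att hne hmem).Adj a (att a) :=
      (dstar_adj_leaf ha ha').mpr rfl
    rcases hmem a with h2 | h2
    · rw [h2] at h1; exact h1.reachable.symm
    · rw [h2] at h1
      exact (h1.reachable.trans
        (dstar_adj_uv (hne := hne) (hmem := hmem)).symm.reachable).symm

/-- side of a vertex -/
private def dside (u v : V) (att : V → V) [DecidableEq V] : V → V :=
  fun x => if x = u then u else if x = v then v else att x

lemma dstar_side_eq [DecidableEq V] {a b : V} (p : (dstar u v att hne hmem).Walk a b)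
    (hp : s(u, v) ∉ p.edges) : dside u v att a = dside u v att b := by
  induction p with
  | nil => rfl
  | cons h q ih =>
    rename_i x y z
    rw [Walk.edges_cons, List.mem_cons] at hp
    push_neg at hp
    refine Eq.trans ?_ (ih hp.2)
    rcases h with ⟨rfl, rfl⟩ | ⟨rfl, rfl⟩ | ⟨h1, h2, rfl⟩ | ⟨h1, h2, h3⟩
    · exact absurd rfl hp.1
    · exact absurd (Sym2.eq_swap) hp.1
    · simp only [dside, if_neg h1, if_neg h2]
      rcases hmem x with h4 | h4 <;> rw [h4] <;> simp [h4, hne, Ne.symm hne]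
    · subst h3
      simp only [dside, if_neg h1, if_neg h2]
      rcases hmem y with h4 | h4 <;> rw [h4] <;> simp [h4, hne, Ne.symm hne]

lemma dstar_leaf_edge_mem [DecidableEq V] {w x : V} (hw1 : w ≠ u) (hw2 : w ≠ v)
    (hx : x = att w) (p : (dstar u v att hne hmem).Walk w x) : s(w, att w) ∈ p.edges := by
  cases p with
  | nil =>
    exfalso; rw [hx] at hw1 hw2; rcases hmem w with h | h
    · exact hw1 h
    · exact hw2 h
  | cons h q =>
    rename_i y
    have : y = att w := (dstar_adj_leaf hw1 hw2).mp h
    subst this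
    simp

lemma dstar_acyclic [DecidableEq V] : (dstar u v att hne hmem).IsAcyclic := by
  rw [isAcyclic_iff_forall_adj_isBridge]
  intro a b hab
  rw [isBridge_iff_adj_and_forall_walk_mem_edges]
  refine fun p => ?_
  rcases hab with ⟨ha, hb⟩ | ⟨ha, hb⟩ | ⟨h1, h2, rfl⟩ | ⟨h1, h2, h3⟩
  · subst ha; subst hb
    by_contra hmemE
    have hs := dstar_side_eq (hne := hne) (hmem := hmem) p hmemE
    simp only [dside, if_pos rfl, if_neg (Ne.symm hne)] at hs
    exact hne hs
  · subst ha; subst hb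
    by_contra hmemE
    rw [Sym2.eq_swap] at hmemE
    have hs := dstar_side_eq (hne := hne) (hmem := hmem) p.reverse (by
      rwa [Walk.edges_reverse, List.mem_reverse])
    simp only [dside, if_pos rfl, if_neg (Ne.symm hne)] at hs
    exact hne hs
  · exact dstar_leaf_edge_mem h1 h2 rfl p
  · subst h3
    have := dstar_leaf_edge_mem (hne := hne) (hmem := hmem) h1 h2 rfl p.reverse
    rw [Walk.edges_reverse, List.mem_reverse] at this
    rwa [Sym2.eq_swap]

lemma dstar_degree [DecidableEq V] [Fintype V] {w : V} (hw1 : w ≠ u) (hw2 : w ≠ v)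
    [DecidableRel (dstar u v att hne hmem).Adj] :
    (dstar u v att hne hmem).degree w = 1 := by
  rw [← card_neighborSet_eq_degree, Fintype.card_eq_one_iff]
  refine ⟨⟨att w, (dstar_adj_leaf (hne := hne) (hmem := hmem) hw1 hw2).mpr rfl⟩,
    fun b => Subtype.ext ?_⟩
  exact (dstar_adj_leaf (hne := hne) (hmem := hmem) hw1 hw2).mp b.2

end DStar


theorem stmt_13 {V : Type*} [Fintype V] [DecidableEq V] (G : SimpleGraph V)
    (hconn : G.Connected) (hcconn : Gᶜ.Connected) (hdiam : G.diam = 3) :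
    ∃ H : SimpleGraph V, ∃ _ : DecidableRel H.Adj,
      H ≤ Gᶜ ∧ IsDoubleStar H := by
  classical
  have hV : Nonempty V := hconn.nonempty
  obtain ⟨u, v, huv⟩ := G.exists_dist_eq_diam
  rw [hdiam] at huv
  have hne : u ≠ v := by
    rintro rfl
    rw [SimpleGraph.dist_self] at huv
    omega
  have hnadj : ¬G.Adj u v := fun h => by
    rw [← dist_eq_one_iff_adj] at h
    omega
  -- no common neighbor
  have hno : ∀ w : V, ¬(G.Adj u w ∧ G.Adj v w) := by
    rintro w ⟨h1, h2⟩
    have ht := hconn.dist_triangle (u := u) (v := w) (w := v)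
    rw [← dist_eq_one_iff_adj] at h1
    have h2' : G.dist w v = 1 := by
      rw [dist_eq_one_iff_adj]; exact h2.symm
    omega
  set att : V → V := fun w => if G.Adj u w then v else u with hatt
  have hmem : ∀ w, att w = u ∨ att w = v := fun w => by
    by_cases h : G.Adj u w <;> simp [hatt, h]
  have hGc : ∀ w, w ≠ u → w ≠ v → Gᶜ.Adj w (att w) := by
    intro w hw1 hw2
    by_cases h : G.Adj u w
    · have : ¬G.Adj v w := fun h' => hno w ⟨h, h'⟩
      simp only [hatt, if_pos h]
      exact ⟨hw2, fun h'' => this h''.symm⟩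
    · simp only [hatt, if_neg h]
      exact ⟨hw1, fun h'' => h h''.symm⟩
  refine ⟨dstar u v att hne hmem, Classical.decRel _, ?_, ?_, u, v,
    dstar_adj_uv, ?_⟩
  · -- H ≤ Gᶜ
    intro a b hab
    rcases hab with ⟨ha, hb⟩ | ⟨ha, hb⟩ | ⟨h1, h2, rfl⟩ | ⟨h1, h2, h3⟩
    · subst ha; subst hb; exact ⟨hne, hnadj⟩
    · subst ha; subst hb; exact ⟨hne.symm, fun h => hnadj h.symm⟩
    · exact hGc a h1 h2
    · subst h3; exact (hGc b h1 h2).symm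
  · exact ⟨dstar_connected, dstar_acyclic⟩
  · intro w hw1 hw2
    exact dstar_degree hw1 hw2
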